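/- Let T be a collection of histories with labels in Y, let (V,E) be the history sDAG constructed from T, let f : E → W be an edge weight function with W clade-ordered with respect to f and (V,E), and suppose g_f(t) = K for all t ∈ T. Then there exists a history t ∈ D(T) with g_f(t) < K if and only if there exists a history t' ∈ D(T) with g_f(t') > K. -/

import Mathlib

universe u v

/-- A node of a history sDAG: either the universal ancestor (UA) node `ρ`,
or a node carrying a label `ℓ : Y` and a subpartition `U : Set (Set Y)`. -/
inductive HNode (Y : Type u) : Type u
  | ua : HNode Y
  | node : Y → Set (Set Y) → HNode Y

namespace HistorySDAGs

variable {Y : Type u}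

/-- `U ∈ Part(Y)`: `U` is a set of pairwise disjoint nonempty (finite) clades with `|U| ≠ 1`. -/
def IsPart (U : Set (Set Y)) : Prop :=
  (∀ C ∈ U, C ≠ ∅) ∧
  (∀ C₁ ∈ U, ∀ C₂ ∈ U, C₁ ≠ C₂ → Disjoint C₁ C₂) ∧
  (∀ C, U ≠ {C}) ∧
  U.Finite ∧ ∀ C ∈ U, C.Finite

open Classical in
/-- The clade union of a node. -/
noncomputable def cladeUnion : HNode Y → Set Y
  | HNode.ua => ∅
  | HNode.node ℓ U => if U = ∅ then {ℓ} else ⋃₀ U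

/-- Reachability via directed edges in `E`. -/
def Reach (E : Set (HNode Y × HNode Y)) (a b : HNode Y) : Prop :=
  Relation.ReflTransGen (fun x y => (x, y) ∈ E) a b

/-- `(V, E)` is a history sDAG on labels `Y`. -/
structure IsHSDAG (V : Set (HNode Y)) (E : Set (HNode Y × HNode Y)) : Prop where
  ua_mem : HNode.ua ∈ V
  valid : ∀ ℓ U, HNode.node ℓ U ∈ V → IsPart U
  edge_mem : ∀ e ∈ E, e.1 ∈ V ∧ e.2 ∈ V
  reach_ua : ∀ v ∈ V, Reach E HNode.ua v
  no_in_ua : ∀ v : HNode Y, (v, HNode.ua) ∉ E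
  edge_clade : ∀ ℓ U v, (HNode.node ℓ U, v) ∈ E → cladeUnion v ∈ U
  clade_cov : ∀ ℓ U, HNode.node ℓ U ∈ V → ∀ C ∈ U,
      ∃ v, (HNode.node ℓ U, v) ∈ E ∧ cladeUnion v = C

/-- Every node-clade pair of `V` has exactly one descendant edge in `E`. -/
def UniqueDesc (V : Set (HNode Y)) (E : Set (HNode Y × HNode Y)) : Prop :=
  ∀ ℓ U, HNode.node ℓ U ∈ V → ∀ C ∈ U,
    ∃! vc, (HNode.node ℓ U, vc) ∈ E ∧ cladeUnion vc = C

/-- `(V, E)` is a history: a history sDAG in which `ρ` has exactly one child and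
each node-clade pair has exactly one descendant edge. -/
def IsHistory (V : Set (HNode Y)) (E : Set (HNode Y × HNode Y)) : Prop :=
  IsHSDAG V E ∧ (∃! v, (HNode.ua, v) ∈ E) ∧ UniqueDesc V E

/-- `(Vs, Es)` is a subhistory of `(V, E)` with root node `vr`. -/
structure IsSubhistoryRooted (V : Set (HNode Y)) (E : Set (HNode Y × HNode Y))
    (Vs : Set (HNode Y)) (Es : Set (HNode Y × HNode Y)) (vr : HNode Y) : Prop where
  subV : Vs ⊆ V
  subE : Es ⊆ E
  ua_not_mem : HNode.ua ∉ Vs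
  edge_mem : ∀ e ∈ Es, e.1 ∈ Vs ∧ e.2 ∈ Vs
  root_mem : vr ∈ Vs
  reach_root : ∀ v ∈ Vs, Reach Es vr v
  unique_desc : ∀ ℓ U, HNode.node ℓ U ∈ Vs → ∀ C ∈ U,
      ∃! vc, (HNode.node ℓ U, vc) ∈ Es ∧ cladeUnion vc = C

/-- `(Vs, Es)` is a subhistory of `(V, E)`. -/
def IsSubhistory (V : Set (HNode Y)) (E : Set (HNode Y × HNode Y))
    (Vs : Set (HNode Y)) (Es : Set (HNode Y × HNode Y)) : Prop :=
  ∃ vr, IsSubhistoryRooted V E Vs Es vr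

/-- `(Vt, Et)` is a history in (a trim of) the history sDAG `(V, E)`. -/
def HistoryIn (V : Set (HNode Y)) (E : Set (HNode Y × HNode Y))
    (Vt : Set (HNode Y)) (Et : Set (HNode Y × HNode Y)) : Prop :=
  Vt ⊆ V ∧ Et ⊆ E ∧ IsHistory Vt Et

/-- The set of labels of leaf nodes in a node set. -/
def leafLabels (Vt : Set (HNode Y)) : Set Y := {ℓ | HNode.node ℓ ∅ ∈ Vt}

/-- A candidate history/graph: a pair of a node set and an edge set. -/
abbrev Hist (Y : Type u) := Set (HNode Y) × Set (HNode Y × HNode Y)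

/-- The node set of the history sDAG constructed from the collection `T`. -/
def unionV (T : Set (Hist Y)) : Set (HNode Y) := ⋃ t ∈ T, t.1

/-- The edge set of the history sDAG constructed from the collection `T`. -/
def unionE (T : Set (Hist Y)) : Set (HNode Y × HNode Y) := ⋃ t ∈ T, t.2

/-- The node set of the complete history sDAG on labels `Y`. -/
def completeV (Y : Type u) : Set (HNode Y) :=
  {v | v = HNode.ua ∨ ∃ ℓ U, v = HNode.node ℓ U ∧ IsPart U}

/-- The edge set of the complete history sDAG on labels `Y`. -/
def completeE (Y : Type u) : Set (HNode Y × HNode Y) :=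
  {e | e.1 ∈ completeV Y ∧ e.2 ∈ completeV Y ∧ e.2 ≠ HNode.ua ∧
    (e.1 = HNode.ua ∨ ∃ ℓ U, e.1 = HNode.node ℓ U ∧ cladeUnion e.2 ∈ U)}

variable {W : Type v}

/-- The weight `g_f` of a subgraph with edge set `Es`: the sum of `f` over all edges. -/
noncomputable def gweight [AddCommMonoid W] (f : HNode Y × HNode Y → W)
    (Es : Set (HNode Y × HNode Y)) : W := ∑ᶠ e ∈ Es, f e

/-- The order is total on the subset `S` of `W`. -/
def TotalOn [PartialOrder W] (S : Set W) : Prop := ∀ a ∈ S, ∀ b ∈ S, a ≤ b ∨ b ≤ a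

/-- The order respects addition on the subset `S` of `W`. -/
def RespectsAdd [AddCommMonoid W] [PartialOrder W] (S : Set W) : Prop :=
  ∀ a ∈ S, ∀ b ∈ S, ∀ c : W, a < b ↔ a + c < b + c

/-- Weights of subhistories of `(V, E)` rooted at `v`. -/
def subWeights [AddCommMonoid W] (f : HNode Y × HNode Y → W)
    (V : Set (HNode Y)) (E : Set (HNode Y × HNode Y)) (v : HNode Y) : Set W :=
  {w | ∃ Vs Es, IsSubhistoryRooted V E Vs Es v ∧ w = gweight f Es}

/-- Weights of augmented subhistories below the node-clade pair `(v, C)`. -/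
def augWeights [AddCommMonoid W] (f : HNode Y × HNode Y → W)
    (V : Set (HNode Y)) (E : Set (HNode Y × HNode Y)) (v : HNode Y) (C : Set Y) : Set W :=
  {w | ∃ vc Vs Es, (v, vc) ∈ E ∧ cladeUnion vc = C ∧ IsSubhistoryRooted V E Vs Es vc ∧
    w = gweight f (insert (v, vc) Es)}

/-- Weights of histories in `(V, E)`. -/
def historyWeights [AddCommMonoid W] (f : HNode Y × HNode Y → W)
    (V : Set (HNode Y)) (E : Set (HNode Y × HNode Y)) : Set W :=
  {w | ∃ Vt Et, HistoryIn V E Vt Et ∧ w = gweight f Et}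

/-- `W` is clade-ordered with respect to `f` and `(V, E)`. -/
def CladeOrdered [AddCommMonoid W] [PartialOrder W] (f : HNode Y × HNode Y → W)
    (V : Set (HNode Y)) (E : Set (HNode Y × HNode Y)) : Prop :=
  (∀ v ∈ V, v ≠ HNode.ua →
      TotalOn (subWeights f V E v) ∧ RespectsAdd (subWeights f V E v)) ∧
  (∀ ℓ U, HNode.node ℓ U ∈ V → ∀ C ∈ U,
      TotalOn (augWeights f V E (HNode.node ℓ U) C) ∧
      RespectsAdd (augWeights f V E (HNode.node ℓ U) C)) ∧
  TotalOn (historyWeights f V E)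

/-- The minimum-weight histories in `(V, E)` with respect to `g_f`. -/
def minHistories [AddCommMonoid W] [PartialOrder W] (f : HNode Y × HNode Y → W)
    (V : Set (HNode Y)) (E : Set (HNode Y × HNode Y)) : Set (Hist Y) :=
  {t | HistoryIn V E t.1 t.2 ∧
    ∀ t' : Hist Y, HistoryIn V E t'.1 t'.2 → gweight f t.2 ≤ gweight f t'.2}

open Classical in
/-- The map `q` collapsing the edge `(vp, vc)`, sending both `vp` and `vc` to `vp'`. -/
noncomputable def collapseMap (vp vc vp' : HNode Y) (v : HNode Y) : HNode Y :=
  if v = vp ∨ v = vc then vp' else v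

/-- The history obtained by collapsing the edge `(vp, vc)` (into `vp'`) in `t`. -/
noncomputable def collapseEdgeHist (vp vc vp' : HNode Y) (t : Hist Y) : Hist Y :=
  (collapseMap vp vc vp' '' t.1,
   (fun e : HNode Y × HNode Y => (collapseMap vp vc vp' e.1, collapseMap vp vc vp' e.2)) ''
     (t.2 \ {(vp, vc)}))

/-- The new parent node `(ℓ_p, (U_p ∪ U_c) \ {CU(v_c)})` formed when collapsing an edge. -/
noncomputable def newParent : HNode Y → HNode Y → HNode Y
  | HNode.node ℓp Up, HNode.node ℓc Uc =>
      HNode.node ℓp ((Up ∪ Uc) \ {cladeUnion (HNode.node ℓc Uc)})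
  | v, _ => v

/-- `t'` results from `t` by collapsing one label-collapsible edge. -/
def LabelCollapseStep (t t' : Hist Y) : Prop :=
  ∃ ℓ Up Uc, (HNode.node ℓ Up, HNode.node ℓ Uc) ∈ t.2 ∧ Uc ≠ ∅ ∧
    t' = collapseEdgeHist (HNode.node ℓ Up) (HNode.node ℓ Uc)
        (newParent (HNode.node ℓ Up) (HNode.node ℓ Uc)) t

/-- `t` is label-collapsed: it has no label-collapsible edge. -/
def LabelCollapsed (t : Hist Y) : Prop :=
  ∀ ℓ Up Uc, (HNode.node ℓ Up, HNode.node ℓ Uc) ∈ t.2 → Uc = ∅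

/-- `(vp, vc)` is a label-collapsible edge of `G`. -/
def LabelCollapsibleEdge (G : Hist Y) (vp vc : HNode Y) : Prop :=
  (vp, vc) ∈ G.2 ∧ ∃ ℓ Up Uc, vp = HNode.node ℓ Up ∧ vc = HNode.node ℓ Uc ∧ Uc ≠ ∅

/-- `T` is a label-collapsible edge cover of `G`. -/
def LabelCollapsibleEdgeCover (G : Hist Y) (T : Set (Hist Y)) : Prop :=
  (∀ t ∈ T, HistoryIn G.1 G.2 t.1 t.2) ∧
  (∀ e ∈ G.2, ∃ t ∈ T, e ∈ t.2) ∧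
  (∀ vp vc, LabelCollapsibleEdge G vp vc →
    ∀ Vs Es, IsSubhistory G.1 G.2 Vs Es → (vp, vc) ∈ Es →
      ∃ t ∈ T, Vs ⊆ t.1 ∧ Es ⊆ t.2)

open Classical in
/-- Collapsing the edge `(vp, vc)` in the history sDAG `G`, via `E⁺`, `R`, `E⁻`, `E'`, `V'`. -/
noncomputable def collapseDAGEdge (vp vc : HNode Y) (G : Hist Y) : Hist Y :=
  let vp' := newParent vp vc
  let Eplus : Set (HNode Y × HNode Y) :=
    (G.2 ∪ {e | ∃ v, e = (v, vp') ∧ (v, vp) ∈ G.2}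
        ∪ {e | ∃ v, e = (vp', v) ∧ (vp, v) ∈ G.2 ∧ cladeUnion v ≠ cladeUnion vc}
        ∪ {e | ∃ v, e = (vp', v) ∧ (vc, v) ∈ G.2}) \ {(vp, vc)}
  let R : Set (HNode Y × HNode Y) :=
    if ∃ v, (vp, v) ∈ Eplus ∧ cladeUnion v = cladeUnion vc then ∅
    else {e ∈ Eplus | e.2 = vp}
  let Eminus := Eplus \ R
  let E' := {e ∈ Eminus | Reach Eminus HNode.ua e.1}
  ({v | ∃ e ∈ E', v = e.1 ∨ v = e.2}, E')

/-- `t'` is obtained from `t` by a subhistory swap, replacing a subhistory of `t` by a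
conforming subhistory of some history in `S`. -/
def SwapStepUsing (S : Set (Hist Y)) (t t' : Hist Y) : Prop :=
  ∃ t₂ ∈ S, ∃ Vs' Es' vr' vp,
    IsSubhistoryRooted t₂.1 t₂.2 Vs' Es' vr' ∧ (vp, vr') ∈ t₂.2 ∧
    ∃ Vs Es vr, IsSubhistoryRooted t.1 t.2 Vs Es vr ∧ (vp, vr) ∈ t.2 ∧
      leafLabels Vs = leafLabels Vs' ∧
      t' = ((t.1 \ Vs) ∪ Vs', (t.2 \ (Es ∪ {(vp, vr)})) ∪ (Es' ∪ {(vp, vr')}))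

/-- Leaves of an abstract rooted graph. -/
def IsLeafIn {α : Type v} (nodes : Set α) (edges : Set (α × α)) (x : α) : Prop :=
  x ∈ nodes ∧ ∀ c, (x, c) ∉ edges

/-- Reachability via directed edges in an abstract graph. -/
def GReach {α : Type v} (edges : Set (α × α)) (a b : α) : Prop :=
  Relation.ReflTransGen (fun x y => (x, y) ∈ edges) a b

/-- An (internally) labeled tree: a rooted multifurcating tree with no unifurcations,
with node labels in `Y` that are injective on leaves. -/
structure IsLabeledTree {α : Type v} (nodes : Set α) (edges : Set (α × α))
    (root : α) (lab : α → Y) : Prop where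
  root_mem : root ∈ nodes
  edge_mem : ∀ e ∈ edges, e.1 ∈ nodes ∧ e.2 ∈ nodes
  reach_root : ∀ x ∈ nodes, GReach edges root x
  unique_parent : ∀ x a b, (a, x) ∈ edges → (b, x) ∈ edges → a = b
  no_parent_root : ∀ a, (a, root) ∉ edges
  acyclic : ∀ x, ¬ Relation.TransGen (fun a b => (a, b) ∈ edges) x x
  no_unif : ∀ x ∈ nodes, ¬ (∃! c, (x, c) ∈ edges)
  leaf_inj : ∀ x y, IsLeafIn nodes edges x → IsLeafIn nodes edges y → lab x = lab y → x = y
  finite : nodes.Finite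

/-- The set `C_w` of leaf labels below a node `w` of an abstract labeled tree. -/
def leavesBelow {α : Type v} (nodes : Set α) (edges : Set (α × α)) (lab : α → Y) (w : α) :
    Set Y :=
  {y | ∃ u, IsLeafIn nodes edges u ∧ GReach edges w u ∧ y = lab u}

/-- The history sDAG node `v_w` associated to a node `w` of a labeled tree. -/
def treeNodeOf {α : Type v} (nodes : Set α) (edges : Set (α × α)) (lab : α → Y) (w : α) :
    HNode Y :=
  HNode.node (lab w) {C | ∃ w', (w, w') ∈ edges ∧ C = leavesBelow nodes edges lab w'}

/-- The node set `V_t` of the history associated to a labeled tree. -/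
def treeToHistV {α : Type v} (nodes : Set α) (edges : Set (α × α)) (lab : α → Y) :
    Set (HNode Y) :=
  insert HNode.ua (treeNodeOf nodes edges lab '' nodes)

/-- The edge set `E_t` of the history associated to a labeled tree. -/
def treeToHistE {α : Type v} (nodes : Set α) (edges : Set (α × α)) (root : α) (lab : α → Y) :
    Set (HNode Y × HNode Y) :=
  insert (HNode.ua, treeNodeOf nodes edges lab root)
    {e | ∃ w₁ w₂, (w₁, w₂) ∈ edges ∧
      e = (treeNodeOf nodes edges lab w₁, treeNodeOf nodes edges lab w₂)}


/-! ### Auxiliary infrastructure for the proof of `updown` -/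

section UpdownAux

/-- The rank of a node: the cardinality of its clade union. -/
noncomputable def rk (v : HNode Y) : ℕ := (cladeUnion v).ncard

/-- The edges of `E₀` whose source is reachable from `v`. -/
def belE (E₀ : Set (HNode Y × HNode Y)) (v : HNode Y) : Set (HNode Y × HNode Y) :=
  {e | e ∈ E₀ ∧ Reach E₀ v e.1}

/-- The nodes reachable from `v` via `E₀`. -/
def belV (E₀ : Set (HNode Y × HNode Y)) (v : HNode Y) : Set (HNode Y) :=
  {x | Reach E₀ v x}

/-- A well-behaved edge set. -/
def GoodE (E₀ : Set (HNode Y × HNode Y)) : Prop :=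
  ∀ e ∈ E₀, e.2 ≠ HNode.ua ∧ cladeUnion e.2 ≠ ∅ ∧
    ∀ ℓ U, e.1 = HNode.node ℓ U → IsPart U ∧ cladeUnion e.2 ∈ U

lemma cu_finite {ℓ : Y} {U : Set (Set Y)} (h : IsPart U) :
    (cladeUnion (HNode.node ℓ U)).Finite := by
  by_cases hU : U = ∅
  · simp [cladeUnion, hU]
  · rw [cladeUnion, if_neg hU]
    exact Set.Finite.sUnion h.2.2.2.1 h.2.2.2.2

lemma cu_sub {ℓ : Y} {U : Set (Set Y)} {C : Set Y} (h : C ∈ U) :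
    C ⊆ cladeUnion (HNode.node ℓ U) := by
  rw [cladeUnion, if_neg (by rintro rfl; exact Set.notMem_empty _ h)]
  exact Set.subset_sUnion_of_mem h

lemma cu_ssub {ℓ : Y} {U : Set (Set Y)} {C : Set Y} (hP : IsPart U) (h : C ∈ U) :
    C ⊂ cladeUnion (HNode.node ℓ U) := by
  refine ⟨cu_sub h, fun hsub => ?_⟩
  obtain ⟨D, hD, hDC⟩ : ∃ D ∈ U, D ≠ C := by
    by_contra hcon
    push_neg at hcon
    exact hP.2.2.1 C (Set.eq_singleton_iff_unique_mem.2 ⟨h, hcon⟩)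
  obtain ⟨y, hy⟩ := Set.nonempty_iff_ne_empty.2 (hP.1 D hD)
  exact Set.disjoint_left.1 (hP.2.1 D hD C h hDC) hy (hsub (cu_sub hD hy))

lemma cu_node_ne {ℓ : Y} {U : Set (Set Y)} (hP : IsPart U) :
    cladeUnion (HNode.node ℓ U) ≠ ∅ := by
  by_cases hU : U = ∅
  · simp [cladeUnion, hU]
  · obtain ⟨C, hC⟩ := Set.nonempty_iff_ne_empty.2 hU
    obtain ⟨y, hy⟩ := Set.nonempty_iff_ne_empty.2 (hP.1 C hC)
    exact fun hcon => Set.notMem_empty y (hcon ▸ cu_sub hC hy)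

lemma rk_lt {E₀ : Set (HNode Y × HNode Y)} (hE : GoodE E₀) {v w : HNode Y}
    (he : (v, w) ∈ E₀) (hv : v ≠ HNode.ua) : rk w < rk v := by
  cases v with
  | ua => exact absurd rfl hv
  | node ℓ U =>
    obtain ⟨hP, hCU⟩ := (hE _ he).2.2 ℓ U rfl
    exact Set.ncard_lt_ncard (cu_ssub hP hCU) (cu_finite hP)

lemma reach_ne_ua {E₀ : Set (HNode Y × HNode Y)} (hE : GoodE E₀) {x y : HNode Y}
    (h : Reach E₀ x y) (hx : x ≠ HNode.ua) : y ≠ HNode.ua := by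
  induction h with
  | refl => exact hx
  | tail _ hbc _ => exact (hE _ hbc).1

lemma rk_le {E₀ : Set (HNode Y × HNode Y)} (hE : GoodE E₀) {x y : HNode Y}
    (h : Reach E₀ x y) (hx : x ≠ HNode.ua) : rk y ≤ rk x := by
  induction h with
  | refl => exact le_refl _
  | tail hab hbc ih => exact le_trans (le_of_lt (rk_lt hE hbc (reach_ne_ua hE hab hx))) ih

lemma reach_eq_of_rk_le {E₀ : Set (HNode Y × HNode Y)} (hE : GoodE E₀) {x y : HNode Y}
    (h : Reach E₀ x y) (hx : x ≠ HNode.ua) (hr : rk x ≤ rk y) : x = y := by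
  rcases h.cases_head with heq | ⟨c, hxc, hcy⟩
  · exact heq
  · exfalso
    have h1 : rk c < rk x := rk_lt hE hxc hx
    have h2 : rk y ≤ rk c := rk_le hE hcy (hE _ hxc).1
    omega

lemma not_reach_ua {E₀ : Set (HNode Y × HNode Y)} (hE : GoodE E₀) {x : HNode Y}
    (hx : x ≠ HNode.ua) : ¬ Reach E₀ x HNode.ua :=
  fun h => (reach_ne_ua hE h hx) rfl

lemma cu_sub_of_edge {E₀ : Set (HNode Y × HNode Y)} (hE : GoodE E₀) {x y : HNode Y}
    (h : (x, y) ∈ E₀) (hx : x ≠ HNode.ua) : cladeUnion y ⊆ cladeUnion x := by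
  cases x with
  | ua => exact absurd rfl hx
  | node ℓ U => exact cu_sub ((hE _ h).2.2 ℓ U rfl).2

lemma cu_mono {E₀ : Set (HNode Y × HNode Y)} (hE : GoodE E₀) {x y : HNode Y}
    (h : Reach E₀ x y) (hx : x ≠ HNode.ua) : cladeUnion y ⊆ cladeUnion x := by
  induction h with
  | refl => exact subset_rfl
  | @tail b c hab hbc ih =>
    exact subset_trans (cu_sub_of_edge hE hbc (reach_ne_ua hE hab hx)) ih

lemma cu_src_ne {E₀ : Set (HNode Y × HNode Y)} (hE : GoodE E₀) {e : HNode Y × HNode Y}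
    (he : e ∈ E₀) (h1 : e.1 ≠ HNode.ua) : cladeUnion e.1 ≠ ∅ := by
  intro hemp
  have hsub := cu_sub_of_edge hE (show (e.1, e.2) ∈ E₀ from he) h1
  exact (hE _ he).2.1 (Set.subset_empty_iff.1 (hemp ▸ hsub))

lemma cu_ne_of_reach {E₀ : Set (HNode Y × HNode Y)} (hE : GoodE E₀) {v x : HNode Y}
    (h : Reach E₀ v x) (hv : cladeUnion v ≠ ∅) : cladeUnion x ≠ ∅ := by
  induction h with
  | refl => exact hv
  | tail _ hbc _ => exact (hE _ hbc).2.1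

lemma reach_upgrade {E₀ : Set (HNode Y × HNode Y)} {w x : HNode Y}
    (h : Reach E₀ w x) : Reach (belE E₀ w) w x := by
  induction h with
  | refl => exact Relation.ReflTransGen.refl
  | tail hab hbc ih => exact ih.tail ⟨hbc, hab⟩

lemma reach_mono {E₀ E₁ : Set (HNode Y × HNode Y)} (h : E₀ ⊆ E₁) {x y : HNode Y}
    (hr : Reach E₀ x y) : Reach E₁ x y :=
  by
    induction hr with
    | refl => exact Relation.ReflTransGen.refl
    | tail _ hbc ih => exact ih.tail (h hbc)

lemma not_reach_back {E₀ : Set (HNode Y × HNode Y)} (hE : GoodE E₀) {vp vc : HNode Y}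
    (he : (vp, vc) ∈ E₀) : ¬ Reach E₀ vc vp := by
  intro h
  by_cases hvp : vp = HNode.ua
  · exact (reach_ne_ua hE h (hE _ he).1) hvp
  · have h1 := rk_le hE h (hE _ he).1
    have h2 := rk_lt hE he hvp
    omega

lemma goodE_of_hist {Vt : Set (HNode Y)} {Et : Set (HNode Y × HNode Y)}
    (ht : IsHistory Vt Et) : GoodE Et := by
  rintro ⟨a, b⟩ he
  have hb : b ≠ HNode.ua := by rintro rfl; exact ht.1.no_in_ua a he
  refine ⟨hb, ?_, ?_⟩
  · have hbV : b ∈ Vt := (ht.1.edge_mem _ he).2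
    cases b with
    | ua => exact absurd rfl hb
    | node ℓ U => exact cu_node_ne (ht.1.valid ℓ U hbV)
  · intro ℓ U h1
    subst h1
    exact ⟨ht.1.valid ℓ U (ht.1.edge_mem _ he).1, ht.1.edge_clade ℓ U b he⟩

lemma mem_unionE {T : Set (Hist Y)} {e : HNode Y × HNode Y} :
    e ∈ unionE T ↔ ∃ t ∈ T, e ∈ t.2 := by simp [unionE]

lemma subset_unionV {T : Set (Hist Y)} {t : Hist Y} (h : t ∈ T) : t.1 ⊆ unionV T :=
  fun x hx => Set.mem_iUnion₂.2 ⟨t, h, hx⟩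

lemma subset_unionE {T : Set (Hist Y)} {t : Hist Y} (h : t ∈ T) : t.2 ⊆ unionE T :=
  fun x hx => Set.mem_iUnion₂.2 ⟨t, h, hx⟩

lemma goodE_unionE {T : Set (Hist Y)} (hT : ∀ t ∈ T, IsHistory t.1 t.2) :
    GoodE (unionE T) := by
  intro e he
  obtain ⟨t, htT, het⟩ := mem_unionE.1 he
  exact goodE_of_hist (hT t htT) e het

end UpdownAux

section HistLemmas

variable {Vt : Set (HNode Y)} {Et : Set (HNode Y × HNode Y)}

lemma root_spec (ht : IsHistory Vt Et) :
    ∃ r, (HNode.ua, r) ∈ Et ∧ ∀ y, (HNode.ua, y) ∈ Et → y = r := by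
  obtain ⟨r, hr, huniq⟩ := ht.2.1
  exact ⟨r, hr, fun y hy => huniq y hy⟩

lemma reach_from_root (ht : IsHistory Vt Et) {r : HNode Y}
    (hru : ∀ y, (HNode.ua, y) ∈ Et → y = r) {x : HNode Y} (hx : x ∈ Vt)
    (hxu : x ≠ HNode.ua) : Reach Et r x := by
  rcases (ht.1.reach_ua x hx).cases_head with heq | ⟨c, hc, hcx⟩
  · exact absurd heq.symm hxu
  · rwa [hru c hc] at hcx

lemma reach_mem_hist (ht : IsHistory Vt Et) {v x : HNode Y} (hv : v ∈ Vt)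
    (h : Reach Et v x) : x ∈ Vt := by
  induction h with
  | refl => exact hv
  | tail _ hbc _ => exact (ht.1.edge_mem _ hbc).2

lemma hist_edges_eq (ht : IsHistory Vt Et) {r : HNode Y} (hr : (HNode.ua, r) ∈ Et)
    (hru : ∀ y, (HNode.ua, y) ∈ Et → y = r) :
    Et = insert (HNode.ua, r) (belE Et r) := by
  ext e
  constructor
  · intro he
    by_cases hu : e.1 = HNode.ua
    · left
      have h2 : (HNode.ua, e.2) ∈ Et := by rwa [← hu, Prod.mk.eta]
      have := hru e.2 h2
      rw [← this, ← hu, Prod.mk.eta]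
    · exact Or.inr ⟨he, reach_from_root ht hru (ht.1.edge_mem e he).1 hu⟩
  · rintro (rfl | ⟨he, _⟩)
    · exact hr
    · exact he

lemma comp_aux (ht : IsHistory Vt Et) :
    ∀ n : ℕ, ∀ z x y : HNode Y, rk z = n → z ≠ HNode.ua → Reach Et z x → Reach Et z y →
      (cladeUnion x ∩ cladeUnion y).Nonempty → Reach Et x y ∨ Reach Et y x := by
  intro n
  induction n using Nat.strong_induction_on with
  | _ n ih =>
    intro z x y hn hz hzx hzy hxy
    rcases hzx.cases_head with rfl | ⟨x₁, hzx₁, hx₁x⟩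
    · exact Or.inl hzy
    rcases hzy.cases_head with rfl | ⟨y₁, hzy₁, hy₁y⟩
    · exact Or.inr hzx
    have hgE := goodE_of_hist ht
    cases z with
    | ua => exact absurd rfl hz
    | node ℓ U =>
      have hP : IsPart U := ((hgE _ hzx₁).2.2 ℓ U rfl).1
      have hx₁U : cladeUnion x₁ ∈ U := ((hgE _ hzx₁).2.2 ℓ U rfl).2
      have hy₁U : cladeUnion y₁ ∈ U := ((hgE _ hzy₁).2.2 ℓ U rfl).2
      have hov : (cladeUnion x₁ ∩ cladeUnion y₁).Nonempty := by
        obtain ⟨p, hp1, hp2⟩ := hxy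
        exact ⟨p, cu_mono hgE hx₁x (hgE _ hzx₁).1 hp1, cu_mono hgE hy₁y (hgE _ hzy₁).1 hp2⟩
      have heq : cladeUnion x₁ = cladeUnion y₁ := by
        by_contra hne
        exact (Set.not_disjoint_iff_nonempty_inter.2 hov) (hP.2.1 _ hx₁U _ hy₁U hne)
      have hxy₁ : x₁ = y₁ := by
        obtain ⟨vc, _, huni⟩ := ht.2.2 ℓ U (ht.1.edge_mem _ hzx₁).1 (cladeUnion x₁) hx₁U
        rw [huni x₁ ⟨hzx₁, rfl⟩, huni y₁ ⟨hzy₁, heq.symm⟩]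
      exact ih (rk x₁) (hn ▸ rk_lt hgE hzx₁ hz) x₁ x y rfl (hgE _ hzx₁).1 hx₁x
        (hxy₁ ▸ hy₁y) hxy

lemma hist_comparable (ht : IsHistory Vt Et) {x y : HNode Y} (hx : x ∈ Vt) (hy : y ∈ Vt)
    (hxu : x ≠ HNode.ua) (hyu : y ≠ HNode.ua)
    (hov : (cladeUnion x ∩ cladeUnion y).Nonempty) : Reach Et x y ∨ Reach Et y x := by
  obtain ⟨r, hr, hru⟩ := root_spec ht
  have hrua : r ≠ HNode.ua := (goodE_of_hist ht _ hr).1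
  exact comp_aux ht (rk r) r x y rfl hrua (reach_from_root ht hru hx hxu)
    (reach_from_root ht hru hy hyu) hov

lemma cu_fin_mem (ht : IsHistory Vt Et) {v : HNode Y} (hv : v ∈ Vt)
    (hvu : v ≠ HNode.ua) : (cladeUnion v).Finite := by
  cases v with
  | ua => exact absurd rfl hvu
  | node ℓ U => exact cu_finite (ht.1.valid ℓ U hv)

lemma hist_unique_parent (ht : IsHistory Vt Et) {vp vc x : HNode Y}
    (h1 : (vp, vc) ∈ Et) (hvp : vp ≠ HNode.ua) (h2 : (x, vc) ∈ Et) : x = vp := by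
  have hgE := goodE_of_hist ht
  have hvcu : vc ≠ HNode.ua := (hgE _ h1).1
  by_cases hxu : x = HNode.ua
  · exfalso
    obtain ⟨r, hr, hru⟩ := root_spec ht
    subst hxu
    have hvcr : vc = r := hru vc h2
    have hrvp : Reach Et r vp := reach_from_root ht hru (ht.1.edge_mem _ h1).1 hvp
    have h3 : rk vp ≤ rk r := rk_le hgE hrvp (hgE _ hr).1
    have h4 : rk vc < rk vp := rk_lt hgE h1 hvp
    rw [hvcr] at h4; omega
  · have hcune : cladeUnion vc ≠ ∅ := (hgE _ h1).2.1
    obtain ⟨p, hp⟩ := Set.nonempty_iff_ne_empty.2 hcune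
    have hov : (cladeUnion x ∩ cladeUnion vp).Nonempty :=
      ⟨p, cu_sub_of_edge hgE h2 hxu hp, cu_sub_of_edge hgE h1 hvp hp⟩
    rcases hist_comparable ht (ht.1.edge_mem _ h2).1 (ht.1.edge_mem _ h1).1 hxu hvp hov with
      hr1 | hr2
    · -- Reach x vp
      rcases hr1.cases_head with heq | ⟨u', hxu', hu'vp⟩
      · exact heq
      · exfalso
        cases x with
        | ua => exact hxu rfl
        | node ℓx Ux =>
          have hvcU : cladeUnion vc ∈ Ux := ((hgE _ h2).2.2 ℓx Ux rfl).2
          have hu'U : cladeUnion u' ∈ Ux := ((hgE _ hxu').2.2 ℓx Ux rfl).2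
          have hPx : IsPart Ux := ((hgE _ h2).2.2 ℓx Ux rfl).1
          have hsub : cladeUnion vp ⊆ cladeUnion u' := cu_mono hgE hu'vp (hgE _ hxu').1
          have hov2 : (cladeUnion u' ∩ cladeUnion vc).Nonempty :=
            ⟨p, hsub (cu_sub_of_edge hgE h1 hvp hp), hp⟩
          have heqU : cladeUnion u' = cladeUnion vc := by
            by_contra hne
            exact (Set.not_disjoint_iff_nonempty_inter.2 hov2) (hPx.2.1 _ hu'U _ hvcU hne)
          -- then CU vp ⊆ CU vc but rk vc < rk vp
          have h5 : rk vp ≤ rk vc := by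
            have : cladeUnion vp ⊆ cladeUnion vc := heqU ▸ hsub
            exact Set.ncard_le_ncard this (cu_fin_mem ht (ht.1.edge_mem _ h1).2 hvcu)
          have h6 : rk vc < rk vp := rk_lt hgE h1 hvp
          omega
    · -- Reach vp x
      rcases hr2.cases_head with heq | ⟨u, hvpu, hux⟩
      · exact heq.symm
      · exfalso
        cases vp with
        | ua => exact hvp rfl
        | node ℓp Up =>
          have hvcU : cladeUnion vc ∈ Up := ((hgE _ h1).2.2 ℓp Up rfl).2
          have huU : cladeUnion u ∈ Up := ((hgE _ hvpu).2.2 ℓp Up rfl).2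
          have hPp : IsPart Up := ((hgE _ h1).2.2 ℓp Up rfl).1
          have hsub : cladeUnion x ⊆ cladeUnion u := cu_mono hgE hux (hgE _ hvpu).1
          have hov2 : (cladeUnion u ∩ cladeUnion vc).Nonempty :=
            ⟨p, hsub (cu_sub_of_edge hgE h2 hxu hp), hp⟩
          have heqU : cladeUnion u = cladeUnion vc := by
            by_contra hne
            exact (Set.not_disjoint_iff_nonempty_inter.2 hov2) (hPp.2.1 _ huU _ hvcU hne)
          have huvc : u = vc := by
            obtain ⟨w, _, huni⟩ :=
              ht.2.2 ℓp Up (ht.1.edge_mem _ h1).1 (cladeUnion vc) hvcU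
            rw [huni u ⟨hvpu, heqU⟩, huni vc ⟨h1, rfl⟩]
          -- Reach vc x and edge (x, vc): cycle
          rw [huvc] at hux
          have h5 : rk x ≤ rk vc := rk_le hgE hux hvcu
          have h6 : rk vc < rk x := rk_lt hgE h2 hxu
          omega

lemma hist_edge_into (ht : IsHistory Vt Et) {vc x y : HNode Y} (hvc : vc ∈ Vt)
    (hvcu : vc ≠ HNode.ua) (he : (x, y) ∈ Et) (hry : Reach Et vc y) :
    Reach Et vc x ∨ y = vc := by
  have hgE := goodE_of_hist ht
  by_cases hyvc : y = vc
  · exact Or.inr hyvc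
  left
  by_cases hxu : x = HNode.ua
  · exfalso
    obtain ⟨r, hr, hru⟩ := root_spec ht
    subst hxu
    have hyr : y = r := hru y he
    have hrvc : Reach Et r vc := reach_from_root ht hru hvc hvcu
    subst hyr
    exact hyvc (reach_eq_of_rk_le hgE hry hvcu (rk_le hgE hrvc (hgE _ hr).1)).symm
  · have hcyne : cladeUnion y ≠ ∅ := (hgE _ he).2.1
    obtain ⟨p, hp⟩ := Set.nonempty_iff_ne_empty.2 hcyne
    have hov : (cladeUnion x ∩ cladeUnion vc).Nonempty :=
      ⟨p, cu_sub_of_edge hgE he hxu hp, cu_mono hgE hry hvcu hp⟩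
    rcases hist_comparable ht (ht.1.edge_mem _ he).1 hvc hxu hvcu hov with h1 | h2
    · -- Reach x vc
      rcases h1.cases_head with heq | ⟨u, hxeu, huvc⟩
      · exact heq ▸ Relation.ReflTransGen.refl
      · exfalso
        cases x with
        | ua => exact hxu rfl
        | node ℓx Ux =>
          have hyU : cladeUnion y ∈ Ux := ((hgE _ he).2.2 ℓx Ux rfl).2
          have huU : cladeUnion u ∈ Ux := ((hgE _ hxeu).2.2 ℓx Ux rfl).2
          have hPx : IsPart Ux := ((hgE _ he).2.2 ℓx Ux rfl).1
          have hsub : cladeUnion vc ⊆ cladeUnion u := cu_mono hgE huvc (hgE _ hxeu).1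
          have hov2 : (cladeUnion u ∩ cladeUnion y).Nonempty :=
            ⟨p, hsub (cu_mono hgE hry hvcu hp), hp⟩
          have heqU : cladeUnion u = cladeUnion y := by
            by_contra hne
            exact (Set.not_disjoint_iff_nonempty_inter.2 hov2) (hPx.2.1 _ huU _ hyU hne)
          have huy : u = y := by
            obtain ⟨w, _, huni⟩ := ht.2.2 ℓx Ux (ht.1.edge_mem _ he).1 (cladeUnion y) hyU
            rw [huni u ⟨hxeu, heqU⟩, huni y ⟨he, rfl⟩]
          rw [huy] at huvc
          -- Reach y vc and Reach vc y with y ≠ vc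
          have h5 : rk vc ≤ rk y := rk_le hgE huvc (hgE _ he).1
          exact hyvc (reach_eq_of_rk_le hgE hry hvcu h5).symm
    · exact h2

lemma hist_reach_of_cu (ht : IsHistory Vt Et) {vc x : HNode Y} (hvc : vc ∈ Vt)
    (hvcu : vc ≠ HNode.ua) (hx : x ∈ Vt) (hxu : x ≠ HNode.ua)
    (hne : cladeUnion x ≠ ∅) (hsub : cladeUnion x ⊆ cladeUnion vc) : Reach Et vc x := by
  have hgE := goodE_of_hist ht
  obtain ⟨p, hp⟩ := Set.nonempty_iff_ne_empty.2 hne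
  rcases hist_comparable ht hx hvc hxu hvcu ⟨p, hp, hsub hp⟩ with h1 | h2
  · -- Reach x vc; then CU equal, ranks equal, x = vc
    have hrk : rk x ≤ rk vc :=
      Set.ncard_le_ncard hsub (cu_fin_mem ht hvc hvcu)
    exact (reach_eq_of_rk_le hgE h1 hxu hrk) ▸ Relation.ReflTransGen.refl
  · exact h2

end HistLemmas

lemma belowHist {V : Set (HNode Y)} {E : Set (HNode Y × HNode Y)}
    {Vt : Set (HNode Y)} {Et : Set (HNode Y × HNode Y)}
    (ht : IsHistory Vt Et) (hV : Vt ⊆ V) (hE : Et ⊆ E) {v : HNode Y}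
    (hv : v ∈ Vt) (hvu : v ≠ HNode.ua) :
    IsSubhistoryRooted V E (belV Et v) (belE Et v) v where
  subV := fun x hx => hV (reach_mem_hist ht hv hx)
  subE := fun _ he => hE he.1
  ua_not_mem := fun h => not_reach_ua (goodE_of_hist ht) hvu h
  edge_mem := fun e he => ⟨he.2, he.2.tail he.1⟩
  root_mem := Relation.ReflTransGen.refl
  reach_root := fun _ hx => reach_upgrade hx
  unique_desc := by
    intro ℓ U hmem C hC
    obtain ⟨vc, ⟨hvc1, hvc2⟩, huni⟩ := ht.2.2 ℓ U (reach_mem_hist ht hv hmem) C hC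
    exact ⟨vc, ⟨⟨hvc1, hmem⟩, hvc2⟩, fun y hy => huni y ⟨hy.1.1, hy.2⟩⟩

section BelowLemmas

variable {Vt : Set (HNode Y)} {Et : Set (HNode Y × HNode Y)}

lemma belE_leaf {E₀ : Set (HNode Y × HNode Y)} (hE : GoodE E₀) (ℓ : Y) :
    belE E₀ (HNode.node ℓ (∅ : Set (Set Y))) = ∅ := by
  ext e
  simp only [belE, Set.mem_setOf_eq, Set.mem_empty_iff_false, iff_false, not_and]
  intro he hre
  rcases hre.cases_head with heq | ⟨z, hz, _⟩
  · exact Set.notMem_empty _ (((hE _ he).2.2 ℓ ∅ heq.symm).2)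
  · exact Set.notMem_empty _ (((hE _ hz).2.2 ℓ ∅ rfl).2)

lemma belE_decomp (ht : IsHistory Vt Et) {ℓ : Y} {U : Set (Set Y)}
    (hv : HNode.node ℓ U ∈ Vt) {w : Set Y → HNode Y}
    (hw1 : ∀ C ∈ U, (HNode.node ℓ U, w C) ∈ Et)
    (hw2 : ∀ C ∈ U, cladeUnion (w C) = C) :
    belE Et (HNode.node ℓ U) = ⋃ C ∈ U, insert (HNode.node ℓ U, w C) (belE Et (w C)) := by
  have hgE := goodE_of_hist ht
  ext e
  simp only [Set.mem_iUnion, exists_prop]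
  constructor
  · rintro ⟨he, hre⟩
    rcases hre.cases_head with heq | ⟨z, hz, hze⟩
    · have he' : (HNode.node ℓ U, e.2) ∈ Et := by rwa [heq, Prod.mk.eta]
      have hCU : cladeUnion e.2 ∈ U := ((hgE _ he).2.2 ℓ U heq.symm).2
      refine ⟨cladeUnion e.2, hCU, Or.inl ?_⟩
      obtain ⟨vc, _, huni⟩ := ht.2.2 ℓ U hv _ hCU
      have h1 : e.2 = vc := huni e.2 ⟨he', rfl⟩
      have h2 : w (cladeUnion e.2) = vc := huni _ ⟨hw1 _ hCU, hw2 _ hCU⟩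
      rw [Prod.ext_iff]
      exact ⟨heq.symm, h1.trans h2.symm⟩
    · have hCU : cladeUnion z ∈ U := ((hgE _ hz).2.2 ℓ U rfl).2
      obtain ⟨vc, _, huni⟩ := ht.2.2 ℓ U hv _ hCU
      have hzw : z = w (cladeUnion z) :=
        (huni z ⟨hz, rfl⟩).trans (huni _ ⟨hw1 _ hCU, hw2 _ hCU⟩).symm
      exact ⟨cladeUnion z, hCU, Or.inr ⟨he, hzw ▸ hze⟩⟩
  · rintro ⟨C, hC, (rfl | ⟨he, hre⟩)⟩
    · exact ⟨hw1 _ hC, Relation.ReflTransGen.refl⟩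
    · exact ⟨he, Relation.ReflTransGen.head (hw1 _ hC) hre⟩

lemma belE_disj (ht : IsHistory Vt Et) {ℓ : Y} {U : Set (Set Y)}
    (hv : HNode.node ℓ U ∈ Vt) {w : Set Y → HNode Y}
    (hw1 : ∀ C ∈ U, (HNode.node ℓ U, w C) ∈ Et)
    (hw2 : ∀ C ∈ U, cladeUnion (w C) = C) :
    U.PairwiseDisjoint (fun C => insert (HNode.node ℓ U, w C) (belE Et (w C))) := by
  have hgE := goodE_of_hist ht
  have hP : IsPart U := ht.1.valid ℓ U hv
  intro C hC C' hC' hne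
  have hnua : HNode.node ℓ U ≠ HNode.ua := by simp
  refine Set.disjoint_left.2 ?_
  rintro e (rfl | ⟨he, hre⟩) he'
  · rcases he' with heq | ⟨_, hre'⟩
    · have : w C = w C' := (Prod.mk.injEq _ _ _ _ ▸ heq).2
      exact hne (by rw [← hw2 _ hC, ← hw2 _ hC', this])
    · -- Reach (w C') (node ℓ U) impossible by rank
      have hre'' : Reach Et (w C') (HNode.node ℓ U) := hre'
      have h1 := rk_le hgE hre'' (hgE _ (hw1 _ hC')).1
      have h2 := rk_lt hgE (hw1 _ hC') hnua
      omega
  · rcases he' with heq | ⟨he2, hre'⟩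
    · have hre2 : Reach Et (w C) (HNode.node ℓ U) := by
        have : e.1 = HNode.node ℓ U := (Prod.mk.injEq _ _ _ _ ▸ heq).1
        rwa [this] at hre
      have h1 := rk_le hgE hre2 (hgE _ (hw1 _ hC)).1
      have h2 := rk_lt hgE (hw1 _ hC) hnua
      omega
    · -- e.1 reachable from both w C and w C'
      have hwCu : w C ≠ HNode.ua := (hgE _ (hw1 _ hC)).1
      have hwC'u : w C' ≠ HNode.ua := (hgE _ (hw1 _ hC')).1
      have hs1 : cladeUnion e.1 ⊆ C := hw2 _ hC ▸ cu_mono hgE hre hwCu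
      have hs2 : cladeUnion e.1 ⊆ C' := hw2 _ hC' ▸ cu_mono hgE hre' hwC'u
      have hne1 : cladeUnion e.1 ≠ ∅ :=
        cu_src_ne hgE he (reach_ne_ua hgE hre hwCu)
      obtain ⟨p, hp⟩ := Set.nonempty_iff_ne_empty.2 hne1
      exact Set.disjoint_left.1 (hP.2.1 C hC C' hC' hne) (hs1 hp) (hs2 hp)

lemma belE_fin (ht : IsHistory Vt Et) :
    ∀ n : ℕ, ∀ v : HNode Y, rk v = n → v ∈ Vt → v ≠ HNode.ua → (belE Et v).Finite := by
  intro n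
  induction n using Nat.strong_induction_on with
  | _ n ih =>
    intro v hn hv hvu
    have hgE := goodE_of_hist ht
    cases v with
    | ua => exact absurd rfl hvu
    | node ℓ U =>
      have hch : ∀ C ∈ U, ∃ vc, (HNode.node ℓ U, vc) ∈ Et ∧ cladeUnion vc = C :=
        fun C hC => (ht.2.2 ℓ U hv C hC).exists
      haveI : Inhabited (HNode Y) := ⟨HNode.ua⟩
      choose! w hw1 hw2 using hch
      rw [belE_decomp ht hv hw1 hw2]
      refine Set.Finite.biUnion (ht.1.valid ℓ U hv).2.2.2.1 (fun C hC => ?_)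
      refine Set.Finite.insert _ (ih (rk (w C)) ?_ (w C) rfl
        ((ht.1.edge_mem _ (hw1 C hC)).2) (hgE _ (hw1 C hC)).1)
      exact hn ▸ rk_lt hgE (hw1 C hC) (by simp)

lemma hist_edges_fin (ht : IsHistory Vt Et) : Et.Finite := by
  obtain ⟨r, hr, hru⟩ := root_spec ht
  rw [hist_edges_eq ht hr hru]
  exact (belE_fin ht (rk r) r rfl ((ht.1.edge_mem _ hr).2)
    ((goodE_of_hist ht) _ hr).1).insert _

lemma belE_fin' (ht : IsHistory Vt Et) (v : HNode Y) : (belE Et v).Finite :=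
  (hist_edges_fin ht).subset fun _ he => he.1

variable {W : Type v} [AddCommMonoid W]

lemma gweight_union (f : HNode Y × HNode Y → W) {S₁ S₂ : Set (HNode Y × HNode Y)}
    (hd : Disjoint S₁ S₂) (h1 : S₁.Finite) (h2 : S₂.Finite) :
    gweight f (S₁ ∪ S₂) = gweight f S₁ + gweight f S₂ :=
  finsum_mem_union hd h1 h2

lemma gweight_insert (f : HNode Y × HNode Y → W) {a : HNode Y × HNode Y}
    {S : Set (HNode Y × HNode Y)} (ha : a ∉ S) (hS : S.Finite) :
    gweight f (insert a S) = f a + gweight f S := by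
  rw [show insert a S = {a} ∪ S from (Set.singleton_union).symm]
  rw [gweight_union f (by simpa) (Set.finite_singleton a) hS]
  congr 1
  exact finsum_mem_singleton

lemma gweight_biUnion (f : HNode Y × HNode Y → W) {U : Set (Set Y)}
    {P : Set Y → Set (HNode Y × HNode Y)} (hU : U.Finite)
    (hP : ∀ C ∈ U, (P C).Finite) (hd : U.PairwiseDisjoint P) :
    gweight f (⋃ C ∈ U, P C) = ∑ᶠ C ∈ U, gweight f (P C) :=
  finsum_mem_biUnion hd hU hP

lemma gweight_aug (ht : IsHistory Vt Et) (f : HNode Y × HNode Y → W) {vp vc : HNode Y}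
    (he : (vp, vc) ∈ Et) :
    gweight f (insert (vp, vc) (belE Et vc)) = f (vp, vc) + gweight f (belE Et vc) :=
  gweight_insert f (fun h => not_reach_back (goodE_of_hist ht) he h.2) (belE_fin' ht vc)

lemma belE_weight (ht : IsHistory Vt Et) (f : HNode Y × HNode Y → W) {ℓ : Y}
    {U : Set (Set Y)} (hv : HNode.node ℓ U ∈ Vt) {w : Set Y → HNode Y}
    (hw1 : ∀ C ∈ U, (HNode.node ℓ U, w C) ∈ Et)
    (hw2 : ∀ C ∈ U, cladeUnion (w C) = C) :
    gweight f (belE Et (HNode.node ℓ U)) =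
      ∑ᶠ C ∈ U, gweight f (insert (HNode.node ℓ U, w C) (belE Et (w C))) := by
  rw [belE_decomp ht hv hw1 hw2]
  exact gweight_biUnion f (ht.1.valid ℓ U hv).2.2.2.1
    (fun C hC => (belE_fin' ht (w C)).insert _) (belE_disj ht hv hw1 hw2)

lemma split_weight (ht : IsHistory Vt Et) (f : HNode Y × HNode Y → W) {vp vc : HNode Y}
    (he : (vp, vc) ∈ Et) :
    gweight f Et = gweight f (Et \ insert (vp, vc) (belE Et vc)) +
      gweight f (insert (vp, vc) (belE Et vc)) := by
  have hsub : insert (vp, vc) (belE Et vc) ⊆ Et := by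
    rintro e (rfl | he')
    · exact he
    · exact he'.1
  rw [← gweight_union f Set.disjoint_sdiff_left
    ((hist_edges_fin ht).subset Set.diff_subset)
    ((hist_edges_fin ht).subset hsub), Set.diff_union_of_subset hsub]

lemma mem_augW {V : Set (HNode Y)} {E : Set (HNode Y × HNode Y)} {t : Hist Y}
    (f : HNode Y × HNode Y → W) (htin : HistoryIn V E t.1 t.2) {vp vc : HNode Y} {C : Set Y}
    (he : (vp, vc) ∈ t.2) (hcu : cladeUnion vc = C) :
    gweight f (insert (vp, vc) (belE t.2 vc)) ∈ augWeights f V E vp C :=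
  ⟨vc, belV t.2 vc, belE t.2 vc, htin.2.1 he, hcu,
    belowHist htin.2.2 htin.1 htin.2.1 (htin.2.2.1.edge_mem _ he).2
      (goodE_of_hist htin.2.2 _ he).1, rfl⟩

end BelowLemmas

section SwapLemma

variable {W : Type v} [AddCommMonoid W]

lemma swap_hist {V : Set (HNode Y)} {E : Set (HNode Y × HNode Y)}
    {t₂ t₃ : Hist Y} (h₂ : HistoryIn V E t₂.1 t₂.2) (h₃ : HistoryIn V E t₃.1 t₃.2)
    {ℓ : Y} {U : Set (Set Y)} {C : Set Y} (hC : C ∈ U) {vc₂ vc₃ : HNode Y}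
    (e₂ : (HNode.node ℓ U, vc₂) ∈ t₂.2) (hcu₂ : cladeUnion vc₂ = C)
    (e₃ : (HNode.node ℓ U, vc₃) ∈ t₃.2) (hcu₃ : cladeUnion vc₃ = C)
    (f : HNode Y × HNode Y → W) :
    ∃ Vt Et, HistoryIn V E Vt Et ∧
      gweight f Et = gweight f (t₂.2 \ insert (HNode.node ℓ U, vc₂) (belE t₂.2 vc₂)) +
        gweight f (insert (HNode.node ℓ U, vc₃) (belE t₃.2 vc₃)) := by
  obtain ⟨hV₂, hE₂, ht₂⟩ := h₂
  obtain ⟨hV₃, hE₃, ht₃⟩ := h₃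
  have hg₂ := goodE_of_hist ht₂
  have hg₃ := goodE_of_hist ht₃
  set vp := HNode.node ℓ U with hvp
  have hvpu : vp ≠ HNode.ua := by simp [hvp]
  have hvp₂ : vp ∈ t₂.1 := (ht₂.1.edge_mem _ e₂).1
  have hvc₂V : vc₂ ∈ t₂.1 := (ht₂.1.edge_mem _ e₂).2
  have hvc₃V : vc₃ ∈ t₃.1 := (ht₃.1.edge_mem _ e₃).2
  have hvc₂u : vc₂ ≠ HNode.ua := (hg₂ _ e₂).1
  have hvc₃u : vc₃ ≠ HNode.ua := (hg₃ _ e₃).1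
  set rest : Set (HNode Y × HNode Y) := t₂.2 \ insert (vp, vc₂) (belE t₂.2 vc₂) with hrest
  set piece : Set (HNode Y × HNode Y) := insert (vp, vc₃) (belE t₃.2 vc₃) with hpiece
  have hA : ∀ e ∈ rest, e ∈ t₂.2 ∧ ¬ Reach t₂.2 vc₂ e.1 ∧ e ≠ (vp, vc₂) := by
    rintro e ⟨he, hni⟩
    simp only [Set.mem_insert_iff, not_or] at hni
    exact ⟨he, fun hr => hni.2 ⟨he, hr⟩, hni.1⟩
  have hB : ∀ x, Reach t₃.2 vc₃ x → x ≠ HNode.ua ∧ cladeUnion x ⊆ C ∧ x ∈ t₃.1 :=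
    fun x hx => ⟨reach_ne_ua hg₃ hx hvc₃u, hcu₃ ▸ cu_mono hg₃ hx hvc₃u,
      reach_mem_hist ht₃ hvc₃V hx⟩
  have hBne : ∀ x, Reach t₃.2 vc₃ x → cladeUnion x ≠ ∅ :=
    fun x hx => cu_ne_of_reach hg₃ hx (hcu₃.symm ▸ (hg₃ _ e₃).2.1)
  have hC7 : ∀ x, x ∈ t₂.1 → x ≠ HNode.ua → cladeUnion x ≠ ∅ → cladeUnion x ⊆ C →
      Reach t₂.2 vc₂ x := fun x hx hxu hxne hxs =>
    hist_reach_of_cu ht₂ hvc₂V hvc₂u hx hxu hxne (hcu₂.symm ▸ hxs)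
  have hexcl : ∀ x, x ∈ t₂.1 → ¬ Reach t₂.2 vc₂ x → ¬ Reach t₃.2 vc₃ x := by
    intro x h1 h2 h3
    exact h2 (hC7 x h1 (hB x h3).1 (hBne x h3) (hB x h3).2.1)
  have hD : ∀ e ∈ rest, ¬ Reach t₂.2 vc₂ e.2 := by
    intro e he hr
    rcases hist_edge_into ht₂ hvc₂V hvc₂u (show (e.1, e.2) ∈ t₂.2 from (hA e he).1) hr with
      h1 | h2
    · exact (hA e he).2.1 h1
    · have h3 : e.1 = vp := hist_unique_parent ht₂ e₂ hvpu
        (by rw [← h2, Prod.mk.eta]; exact (hA e he).1)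
      exact (hA e he).2.2 (by rw [← Prod.mk.eta (p := e), h3, h2])
  have hnotb₂ : ¬ Reach t₂.2 vc₂ vp := not_reach_back hg₂ e₂
  have hnotb₃ : ¬ Reach t₃.2 vc₃ vp := not_reach_back hg₃ e₃
  have hEavoid : ∀ x, Reach t₂.2 HNode.ua x → ¬ Reach t₂.2 vc₂ x →
      Reach rest HNode.ua x := by
    intro x hx
    induction hx with
    | refl => exact fun _ => Relation.ReflTransGen.refl
    | @tail b c hab hbc ih =>
      intro hnc
      have hnb : ¬ Reach t₂.2 vc₂ b := fun h => hnc (h.tail hbc)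
      refine (ih hnb).tail ⟨hbc, ?_⟩
      simp only [Set.mem_insert_iff, not_or]
      constructor
      · intro heq
        have hcvc : c = vc₂ := congrArg Prod.snd heq
        subst hcvc
        exact hnc Relation.ReflTransGen.refl
      · rintro ⟨_, hrb⟩; exact hnb hrb
  set Vt : Set (HNode Y) := (t₂.1 \ belV t₂.2 vc₂) ∪ belV t₃.2 vc₃ with hVt
  set Et : Set (HNode Y × HNode Y) := rest ∪ piece with hEt
  have hmem_rest : rest ⊆ Et := Set.subset_union_left
  have hmem_piece : piece ⊆ Et := Set.subset_union_right
  have hVtsplit : ∀ x ∈ Vt, (x ∈ t₂.1 ∧ ¬ Reach t₂.2 vc₂ x) ∨ Reach t₃.2 vc₃ x := by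
    rintro x (⟨h1, h2⟩ | h)
    · exact Or.inl ⟨h1, h2⟩
    · exact Or.inr h
  have hedge_mem : ∀ e ∈ Et, e.1 ∈ Vt ∧ e.2 ∈ Vt := by
    rintro e (he | he)
    · exact ⟨Or.inl ⟨(ht₂.1.edge_mem _ (hA e he).1).1, (hA e he).2.1⟩,
        Or.inl ⟨(ht₂.1.edge_mem _ (hA e he).1).2, hD e he⟩⟩
    · rcases he with rfl | ⟨he1, he2⟩
      · exact ⟨Or.inl ⟨hvp₂, hnotb₂⟩, Or.inr Relation.ReflTransGen.refl⟩
      · exact ⟨Or.inr he2, Or.inr (he2.tail he1)⟩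
  have hreach : ∀ x ∈ Vt, Reach Et HNode.ua x := by
    have hvpV : Reach Et HNode.ua vp :=
      reach_mono hmem_rest (hEavoid vp (ht₂.1.reach_ua vp hvp₂) hnotb₂)
    rintro x hx
    rcases hVtsplit x hx with ⟨h1, h2⟩ | h
    · exact reach_mono hmem_rest (hEavoid x (ht₂.1.reach_ua x h1) h2)
    · refine Relation.ReflTransGen.trans (hvpV.tail (hmem_piece (Set.mem_insert _ _))) ?_
      exact reach_mono (fun e he => hmem_piece (Set.mem_insert_of_mem _ he)) (reach_upgrade h)
  have huniq : ∀ ℓx Ux, HNode.node ℓx Ux ∈ Vt → ∀ C₀ ∈ Ux,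
      ∃! vc, (HNode.node ℓx Ux, vc) ∈ Et ∧ cladeUnion vc = C₀ := by
    intro ℓx Ux hxVt C₀ hC₀
    by_cases hxb : Reach t₃.2 vc₃ (HNode.node ℓx Ux)
    · obtain ⟨wc, ⟨hwc1, hwc2⟩, huni3⟩ := ht₃.2.2 ℓx Ux (hB _ hxb).2.2 C₀ hC₀
      refine ⟨wc, ⟨hmem_piece (Set.mem_insert_of_mem _ ⟨hwc1, hxb⟩), hwc2⟩, ?_⟩
      rintro y ⟨hy, hycu⟩
      rcases hy with hyr | hyp
      · exact absurd hxb (hexcl _ (ht₂.1.edge_mem _ (hA _ hyr).1).1 (hA _ hyr).2.1)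
      · rcases hyp with heq | hyb
        · have h1 : HNode.node ℓx Ux = vp := congrArg Prod.fst heq
          exact absurd (h1 ▸ hxb) hnotb₃
        · exact huni3 y ⟨hyb.1, hycu⟩
    · have hx2 : HNode.node ℓx Ux ∈ t₂.1 ∧ ¬ Reach t₂.2 vc₂ (HNode.node ℓx Ux) := by
        rcases hVtsplit _ hxVt with h | h
        · exact h
        · exact absurd h hxb
      by_cases hcase : HNode.node ℓx Ux = vp ∧ C₀ = C
      · obtain ⟨hxeq, hC₀C⟩ := hcase
        rw [hxeq, hC₀C]
        refine ⟨vc₃, ⟨hmem_piece (Set.mem_insert _ _), hcu₃⟩, ?_⟩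
        rintro y ⟨hy, hycu⟩
        rcases hy with hyr | hyp
        · exfalso
          obtain ⟨uu, _, huni2⟩ := ht₂.2.2 ℓ U hvp₂ C hC
          have hy2 : y = vc₂ := by
            rw [huni2 y ⟨(hA _ hyr).1, hycu⟩, huni2 vc₂ ⟨e₂, hcu₂⟩]
          exact (hA _ hyr).2.2 (by rw [hy2])
        · rcases hyp with heq | hyb
          · exact congrArg Prod.snd heq
          · exact absurd hyb.2 hnotb₃
      · obtain ⟨wc, ⟨hwc1, hwc2⟩, huni2⟩ := ht₂.2.2 ℓx Ux hx2.1 C₀ hC₀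
        refine ⟨wc, ⟨hmem_rest ⟨hwc1, ?_⟩, hwc2⟩, ?_⟩
        · simp only [Set.mem_insert_iff, not_or]
          constructor
          · intro heq
            have hq2 : wc = vc₂ := congrArg Prod.snd heq
            refine hcase ⟨congrArg Prod.fst heq, ?_⟩
            rw [← hwc2, hq2, hcu₂]
          · rintro ⟨_, hrb⟩
            exact hx2.2 hrb
        · rintro y ⟨hy, hycu⟩
          rcases hy with hyr | hyp
          · exact huni2 y ⟨(hA _ hyr).1, hycu⟩
          · rcases hyp with heq | hyb
            · exfalso
              have hq2 : y = vc₃ := congrArg Prod.snd heq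
              refine hcase ⟨congrArg Prod.fst heq, ?_⟩
              rw [← hycu, hq2, hcu₃]
            · exact absurd hyb.2 (hexcl _ hx2.1 hx2.2)
  obtain ⟨r₂, hr₂, hru₂⟩ := root_spec ht₂
  have hr₂rest : (HNode.ua, r₂) ∈ rest := by
    refine ⟨hr₂, ?_⟩
    simp only [Set.mem_insert_iff, not_or]
    exact ⟨fun heq => hvpu (congrArg Prod.fst heq).symm,
      fun hb => not_reach_ua hg₂ hvc₂u hb.2⟩
  have hdisj : Disjoint rest piece := by
    rw [Set.disjoint_left]
    intro e he hp
    rcases hp with rfl | ⟨hp1, hp2⟩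
    · obtain ⟨uu, _, huni2⟩ := ht₂.2.2 ℓ U hvp₂ C hC
      have h32 : vc₃ = vc₂ := by
        rw [huni2 vc₃ ⟨(hA _ he).1, hcu₃⟩, huni2 vc₂ ⟨e₂, hcu₂⟩]
      exact (hA _ he).2.2 (by rw [h32])
    · exact hexcl _ (ht₂.1.edge_mem _ (hA _ he).1).1 (hA _ he).2.1 hp2
  refine ⟨Vt, Et, ⟨?_, ?_, ⟨?_, ?_, huniq⟩⟩, ?_⟩
  · rintro x (⟨h1, _⟩ | h)
    · exact hV₂ h1
    · exact hV₃ (hB x h).2.2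
  · rintro e (he | he)
    · exact hE₂ (hA e he).1
    · rcases he with rfl | ⟨he1, _⟩
      · exact hE₃ e₃
      · exact hE₃ he1
  · refine ⟨Or.inl ⟨ht₂.1.ua_mem, not_reach_ua hg₂ hvc₂u⟩, ?_, hedge_mem, hreach, ?_, ?_, ?_⟩
    · intro ℓx Ux hx
      rcases hVtsplit _ hx with ⟨h1, _⟩ | h
      · exact ht₂.1.valid ℓx Ux h1
      · exact ht₃.1.valid ℓx Ux (hB _ h).2.2
    · rintro v (hv | hv)
      · exact ht₂.1.no_in_ua v (hA _ hv).1
      · rcases hv with heq | hv2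
        · exact hvc₃u (congrArg Prod.snd heq).symm
        · exact ht₃.1.no_in_ua v hv2.1
    · rintro ℓx Ux v (hv | hv)
      · exact ht₂.1.edge_clade ℓx Ux v (hA _ hv).1
      · rcases hv with heq | hv2
        · have h1 : HNode.node ℓx Ux = vp := congrArg Prod.fst heq
          have h2 : v = vc₃ := congrArg Prod.snd heq
          rw [hvp] at h1
          obtain ⟨rfl, rfl⟩ := HNode.node.injEq _ _ _ _ ▸ h1
          rw [h2, hcu₃]
          exact hC
        · exact ht₃.1.edge_clade ℓx Ux v hv2.1
    · intro ℓx Ux hx C₀ hC₀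
      obtain ⟨vc, hvc, _⟩ := huniq ℓx Ux hx C₀ hC₀
      exact ⟨vc, hvc.1, hvc.2⟩
  · refine ⟨r₂, hmem_rest hr₂rest, ?_⟩
    rintro y (hy | hy)
    · exact hru₂ y (hA _ hy).1
    · rcases hy with heq | hy2
      · exact absurd (congrArg Prod.fst heq).symm hvpu
      · exact absurd hy2.2 (not_reach_ua hg₃ hvc₃u)
  · exact gweight_union f hdisj ((hist_edges_fin ht₂).subset (fun e he => (hA e he).1))
      ((belE_fin' ht₃ vc₃).insert _)

end SwapLemma

section MainInd

variable {W : Type v} [AddCommMonoid W] [PartialOrder W]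

lemma main_ind {T : Set (Hist Y)} (hT : ∀ t ∈ T, IsHistory t.1 t.2)
    (f : HNode Y × HNode Y → W) (hco : CladeOrdered f (unionV T) (unionE T))
    (K : W) (hK : ∀ t ∈ T, gweight f t.2 = K) :
    ∀ n : ℕ, ∀ C : Set Y, C.ncard = n → ∀ ℓ U, C ∈ U →
      ∀ h : Hist Y, HistoryIn (unionV T) (unionE T) h.1 h.2 →
      ∀ t₂ ∈ T, ∀ vch vc₂ : HNode Y,
        (HNode.node ℓ U, vch) ∈ h.2 → cladeUnion vch = C →
        (HNode.node ℓ U, vc₂) ∈ t₂.2 → cladeUnion vc₂ = C →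
        gweight f (insert (HNode.node ℓ U, vch) (belE h.2 vch)) ≠
          gweight f (insert (HNode.node ℓ U, vc₂) (belE t₂.2 vc₂)) →
        (∃ Vt Et, HistoryIn (unionV T) (unionE T) Vt Et ∧ gweight f Et < K) ∧
        (∃ Vt Et, HistoryIn (unionV T) (unionE T) Vt Et ∧ K < gweight f Et) := by
  intro n
  induction n using Nat.strong_induction_on with
  | _ n ih =>
    intro C hCn ℓ U hCU h hh t₂ ht₂T vch vc₂ eh hcuh e₂ hcu₂ hne
    have hhh : IsHistory h.1 h.2 := hh.2.2
    have hgh := goodE_of_hist hhh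
    obtain ⟨t₃, ht₃T, e₃⟩ := mem_unionE.1 (hh.2.1 eh)
    have hin₂ : HistoryIn (unionV T) (unionE T) t₂.1 t₂.2 :=
      ⟨subset_unionV ht₂T, subset_unionE ht₂T, hT t₂ ht₂T⟩
    have hin₃ : HistoryIn (unionV T) (unionE T) t₃.1 t₃.2 :=
      ⟨subset_unionV ht₃T, subset_unionE ht₃T, hT t₃ ht₃T⟩
    have ht₃ := hT t₃ ht₃T
    have hg₃ := goodE_of_hist ht₃
    by_cases hcb : gweight f (insert (HNode.node ℓ U, vch) (belE t₃.2 vch)) =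
        gweight f (insert (HNode.node ℓ U, vc₂) (belE t₂.2 vc₂))
    · -- the weights of the `t₃` piece and the `t₂` piece agree; recurse into `vch`
      have hac : gweight f (insert (HNode.node ℓ U, vch) (belE h.2 vch)) ≠
          gweight f (insert (HNode.node ℓ U, vch) (belE t₃.2 vch)) := by
        rw [hcb]; exact hne
      have hvchu : vch ≠ HNode.ua := (hgh _ eh).1
      cases vch with
      | ua => exact absurd rfl hvchu
      | node ℓc Uc =>
        have hvch_h : HNode.node ℓc Uc ∈ h.1 := (hhh.1.edge_mem _ eh).2
        have hvch_3 : HNode.node ℓc Uc ∈ t₃.1 := (ht₃.1.edge_mem _ e₃).2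
        by_cases hUc : Uc = ∅
        · subst hUc
          exact absurd (by rw [belE_leaf hgh, belE_leaf hg₃]) hac
        · haveI : Inhabited (HNode Y) := ⟨HNode.ua⟩
          have hch : ∀ C' ∈ Uc, ∃ vc, (HNode.node ℓc Uc, vc) ∈ h.2 ∧ cladeUnion vc = C' :=
            fun C' hC' => (hhh.2.2 ℓc Uc hvch_h C' hC').exists
          choose! wh hwh1 hwh2 using hch
          have hch3 : ∀ C' ∈ Uc, ∃ vc, (HNode.node ℓc Uc, vc) ∈ t₃.2 ∧ cladeUnion vc = C' :=
            fun C' hC' => (ht₃.2.2 ℓc Uc hvch_3 C' hC').exists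
          choose! w3 hw31 hw32 using hch3
          by_cases hall : ∀ C' ∈ Uc,
              gweight f (insert (HNode.node ℓc Uc, wh C') (belE h.2 (wh C'))) =
              gweight f (insert (HNode.node ℓc Uc, w3 C') (belE t₃.2 (w3 C')))
          · exfalso
            apply hac
            rw [gweight_aug hhh f eh, gweight_aug ht₃ f e₃,
              belE_weight hhh f hvch_h hwh1 hwh2, belE_weight ht₃ f hvch_3 hw31 hw32,
              finsum_mem_congr rfl hall]
          · push_neg at hall
            obtain ⟨C', hC', hneq⟩ := hall
            have hPU : IsPart U := ((goodE_unionE hT _ (hh.2.1 eh)).2.2 ℓ U rfl).1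
            have hCfin : C.Finite := hPU.2.2.2.2 C hCU
            have hPc : IsPart Uc := hhh.1.valid ℓc Uc hvch_h
            have hss : C' ⊂ C := hcuh ▸ cu_ssub hPc hC'
            exact ih C'.ncard (hCn ▸ Set.ncard_lt_ncard hss hCfin) C' rfl ℓc Uc hC'
              h hh t₃ ht₃T (wh C') (w3 C') (hwh1 C' hC') (hwh2 C' hC')
              (hw31 C' hC') (hw32 C' hC') hneq
    · -- the pieces of `t₂` and `t₃` differ in weight: swap them
      have hvpV : HNode.node ℓ U ∈ unionV T := hh.1 (hhh.1.edge_mem _ eh).1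
      obtain ⟨hTot, hRA⟩ := hco.2.1 ℓ U hvpV C hCU
      have hbmem := mem_augW f hin₂ e₂ hcu₂
      have hcmem := mem_augW f hin₃ e₃ hcuh
      obtain ⟨V2, E2, hist23, hw23⟩ := swap_hist hin₂ hin₃ hCU e₂ hcu₂ e₃ hcuh f
      obtain ⟨V3, E3, hist32, hw32'⟩ := swap_hist hin₃ hin₂ hCU e₃ hcuh e₂ hcu₂ f
      have hsplit2 := split_weight (hT t₂ ht₂T) f e₂
      have hsplit3 := split_weight ht₃ f e₃
      set b := gweight f (insert (HNode.node ℓ U, vc₂) (belE t₂.2 vc₂)) with hb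
      set c := gweight f (insert (HNode.node ℓ U, vch) (belE t₃.2 vch)) with hc
      set R₂ := gweight f (t₂.2 \ insert (HNode.node ℓ U, vc₂) (belE t₂.2 vc₂)) with hR₂
      set R₃ := gweight f (t₃.2 \ insert (HNode.node ℓ U, vch) (belE t₃.2 vch)) with hR₃
      have hK2 : R₂ + b = K := by rw [← hsplit2]; exact hK t₂ ht₂T
      have hK3 : R₃ + c = K := by rw [← hsplit3]; exact hK t₃ ht₃T
      rcases hTot b hbmem c hcmem with hle | hle
      · have hblt : b < c := lt_of_le_of_ne hle (fun hbc => hcb hbc.symm)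
        refine ⟨⟨V3, E3, hist32, ?_⟩, ⟨V2, E2, hist23, ?_⟩⟩
        · rw [hw32', ← hK3, add_comm R₃ b, add_comm R₃ c]
          exact (hRA b hbmem c hcmem R₃).1 hblt
        · rw [hw23, ← hK2, add_comm R₂ b, add_comm R₂ c]
          exact (hRA b hbmem c hcmem R₂).1 hblt
      · have hclt : c < b := lt_of_le_of_ne hle hcb
        refine ⟨⟨V2, E2, hist23, ?_⟩, ⟨V3, E3, hist32, ?_⟩⟩
        · rw [hw23, ← hK2, add_comm R₂ b, add_comm R₂ c]
          exact (hRA c hcmem b hbmem R₂).1 hclt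
        · rw [hw32', ← hK3, add_comm R₃ b, add_comm R₃ c]
          exact (hRA c hcmem b hbmem R₃).1 hclt

lemma exists_both {T : Set (Hist Y)} (hT : ∀ t ∈ T, IsHistory t.1 t.2)
    (f : HNode Y × HNode Y → W) (hco : CladeOrdered f (unionV T) (unionE T))
    (K : W) (hK : ∀ t ∈ T, gweight f t.2 = K) {h : Hist Y}
    (hh : HistoryIn (unionV T) (unionE T) h.1 h.2) (hne : gweight f h.2 ≠ K) :
    (∃ Vt Et, HistoryIn (unionV T) (unionE T) Vt Et ∧ gweight f Et < K) ∧
    (∃ Vt Et, HistoryIn (unionV T) (unionE T) Vt Et ∧ K < gweight f Et) := by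
  have hhh : IsHistory h.1 h.2 := hh.2.2
  have hgh := goodE_of_hist hhh
  obtain ⟨r, hr, hru⟩ := root_spec hhh
  obtain ⟨t₂, ht₂T, hr₂⟩ := mem_unionE.1 (hh.2.1 hr)
  have ht₂ := hT t₂ ht₂T
  have hg₂ := goodE_of_hist ht₂
  obtain ⟨r₂, hr₂', hru₂⟩ := root_spec ht₂
  have hrr : r = r₂ := hru₂ r hr₂
  subst hrr
  have hda : gweight f h.2 = f (HNode.ua, r) + gweight f (belE h.2 r) := by
    conv_lhs => rw [hist_edges_eq hhh hr hru]
    exact gweight_insert f (fun hcon => not_reach_ua hgh (hgh _ hr).1 hcon.2) (belE_fin' hhh r)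
  have hd2 : gweight f t₂.2 = f (HNode.ua, r) + gweight f (belE t₂.2 r) := by
    conv_lhs => rw [hist_edges_eq ht₂ hr₂' hru₂]
    exact gweight_insert f (fun hcon => not_reach_ua hg₂ (hg₂ _ hr₂').1 hcon.2)
      (belE_fin' ht₂ r)
  have hbelne : gweight f (belE h.2 r) ≠ gweight f (belE t₂.2 r) := by
    intro hcon
    exact hne (by rw [hda, hcon, ← hd2, hK t₂ ht₂T])
  have hrmemh : r ∈ h.1 := (hhh.1.edge_mem _ hr).2
  have hrmemt : r ∈ t₂.1 := (ht₂.1.edge_mem _ hr₂).2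
  have hrua : r ≠ HNode.ua := (hgh _ hr).1
  cases r with
  | ua => exact absurd rfl hrua
  | node ℓ U =>
    by_cases hU : U = ∅
    · subst hU
      exact absurd (by rw [belE_leaf hgh, belE_leaf hg₂]) hbelne
    · haveI : Inhabited (HNode Y) := ⟨HNode.ua⟩
      have hch : ∀ C ∈ U, ∃ vc, (HNode.node ℓ U, vc) ∈ h.2 ∧ cladeUnion vc = C :=
        fun C hC => (hhh.2.2 ℓ U hrmemh C hC).exists
      choose! wh hwh1 hwh2 using hch
      have hch2 : ∀ C ∈ U, ∃ vc, (HNode.node ℓ U, vc) ∈ t₂.2 ∧ cladeUnion vc = C :=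
        fun C hC => (ht₂.2.2 ℓ U hrmemt C hC).exists
      choose! w2 hw21 hw22 using hch2
      by_cases hall : ∀ C ∈ U,
          gweight f (insert (HNode.node ℓ U, wh C) (belE h.2 (wh C))) =
          gweight f (insert (HNode.node ℓ U, w2 C) (belE t₂.2 (w2 C)))
      · exfalso
        apply hbelne
        rw [belE_weight hhh f hrmemh hwh1 hwh2, belE_weight ht₂ f hrmemt hw21 hw22,
          finsum_mem_congr rfl hall]
      · push_neg at hall
        obtain ⟨C, hC, hneq⟩ := hall
        exact main_ind hT f hco K hK C.ncard C rfl ℓ U hC h hh t₂ ht₂T (wh C) (w2 C)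
          (hwh1 C hC) (hwh2 C hC) (hw21 C hC) (hw22 C hC) hneq

end MainInd

/-- Theorem `updown`: if every history in `T` has weight `K`, then the
history sDAG constructed from `T` contains a history of weight `< K` iff it contains a
history of weight `> K`. -/
theorem updown {W : Type v} [AddCommMonoid W] [PartialOrder W]
    (T : Set (Hist Y)) (hT : ∀ t ∈ T, IsHistory t.1 t.2)
    (f : HNode Y × HNode Y → W)
    (hco : CladeOrdered f (unionV T) (unionE T))
    (K : W) (hK : ∀ t ∈ T, gweight f t.2 = K) :
    (∃ Vt Et, HistoryIn (unionV T) (unionE T) Vt Et ∧ gweight f Et < K) ↔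
      (∃ Vt Et, HistoryIn (unionV T) (unionE T) Vt Et ∧ K < gweight f Et) := by
  constructor
  · rintro ⟨Vt, Et, hin, hlt⟩
    exact (exists_both hT f hco K hK (h := (Vt, Et)) hin (ne_of_lt hlt)).2
  · rintro ⟨Vt, Et, hin, hgt⟩
    exact (exists_both hT f hco K hK (h := (Vt, Et)) hin (ne_of_gt hgt)).1

end HistorySDAGs
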